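/- arXiv:2604.02303 — 6 statements merged into one kernel-verified Lean document; each statement's English description precedes it below -/
import Mathlib

section
/- Let Γ be a directed graph on vertex set 𝔹^n. Then there exists a Boolean network f of dimension n with Γ = GA(f) if and only if Γ is reflexive and the out-neighbourhood of every vertex is a subcube of 𝔹^n. -/
/-!  Common definitions: Boolean networks on `Fin n → Bool`. -/

/-- The update `f^{(S)}` of the coordinates in `S` according to `f`. -/
def upd {n : ℕ} (f : (Fin n → Bool) → Fin n → Bool) (S : Finset (Fin n)) :
    (Fin n → Bool) → Fin n → Bool :=
  fun x i => if i ∈ S then f x i else x i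

/-- `f^{(S,T)} = f^{(T)} ∘ f^{(S)}`. -/
def upd2 {n : ℕ} (f : (Fin n → Bool) → Fin n → Bool) (S T : Finset (Fin n)) :
    (Fin n → Bool) → Fin n → Bool :=
  upd f T ∘ upd f S

/-- `Δ(x,y)`, the set of coordinates where `x` and `y` differ. -/
def delta {n : ℕ} (x y : Fin n → Bool) : Set (Fin n) := {i | x i ≠ y i}

/-- Hamming distance. -/
noncomputable def hdist {n : ℕ} (x y : Fin n → Bool) : ℕ := (delta x y).ncard

/-- The interval (subcube) `[x,y]`. -/
def interval {n : ℕ} (x y : Fin n → Bool) : Set (Fin n → Bool) :=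
  {z | delta x z ⊆ delta x y}

/-- A subcube of `𝔹^n`: fix the coordinates in `S` to `0` and those in `T` to `1`. -/
def IsSubcube {n : ℕ} (X : Set (Fin n → Bool)) : Prop :=
  ∃ S T : Set (Fin n), Disjoint S T ∧
    X = {x | (∀ i ∈ S, x i = false) ∧ (∀ i ∈ T, x i = true)}

/-- The partial order `f ⊑ g` on Boolean networks. -/
def BNle {n : ℕ} (f g : (Fin n → Bool) → Fin n → Bool) : Prop :=
  ∀ x, delta x (f x) ⊆ delta x (g x)

/-- A trapspace of `f`: an invariant subcube. -/
def IsTrapspace {n : ℕ} (f : (Fin n → Bool) → Fin n → Bool)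
    (X : Set (Fin n → Bool)) : Prop :=
  IsSubcube X ∧ ∀ x ∈ X, f x ∈ X

/-- The collection of all trapspaces of `f`. -/
def trapspaces {n : ℕ} (f : (Fin n → Bool) → Fin n → Bool) :
    Set (Set (Fin n → Bool)) :=
  {X | IsTrapspace f X}

/-- The principal trapspace `T_f(x)`: the smallest trapspace of `f` containing `x`. -/
def Tprin {n : ℕ} (f : (Fin n → Bool) → Fin n → Bool) (x : Fin n → Bool) :
    Set (Fin n → Bool) :=
  ⋂₀ {X | IsTrapspace f X ∧ x ∈ X}

/-- The collection of principal trapspaces of `f`. -/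
def PT {n : ℕ} (f : (Fin n → Bool) → Fin n → Bool) : Set (Set (Fin n → Bool)) :=
  {X | ∃ x, X = Tprin f x}

-- The opposite of `x` in a subcube `X` containing `x`: the coordinate `i` is flipped
-- iff some element of `X` differs from `x` there; so `[x, opp X x] = X` when `X` is a
-- subcube containing `x`.
open scoped Classical in
noncomputable def opp {n : ℕ} (X : Set (Fin n → Bool)) (x : Fin n → Bool) :
    Fin n → Bool :=
  fun i => if ∃ y ∈ X, y i ≠ x i then !(x i) else x i

/-- The trapping closure `f^T`, characterised by `[x, f^T(x)] = T_f(x)`. -/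
noncomputable def trapClosure {n : ℕ} (f : (Fin n → Bool) → Fin n → Bool) :
    (Fin n → Bool) → Fin n → Bool :=
  fun x => opp (Tprin f x) x

/-- The general asynchronous graph of `f`, as a relation on `𝔹^n`. -/
def GA {n : ℕ} (f : (Fin n → Bool) → Fin n → Bool) :
    (Fin n → Bool) → (Fin n → Bool) → Prop :=
  fun x y => ∃ S : Finset (Fin n), y = upd f S x

/-- The asynchronous graph of `f`, as a relation on `𝔹^n`. -/
def Agraph {n : ℕ} (f : (Fin n → Bool) → Fin n → Bool) :
    (Fin n → Bool) → (Fin n → Bool) → Prop :=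
  fun x y => ∃ i : Fin n, y = upd f {i} x

/-- The trapping graph of `f`: an edge `(x,y)` iff `y ∈ T_f(x)`. -/
def TG {n : ℕ} (f : (Fin n → Bool) → Fin n → Bool) :
    (Fin n → Bool) → (Fin n → Bool) → Prop :=
  fun x y => y ∈ Tprin f x

/-- A network is trapping if its general asynchronous graph is transitive. -/
def IsTrapping {n : ℕ} (f : (Fin n → Bool) → Fin n → Bool) : Prop :=
  Transitive (GA f)

/-- A commutative Boolean network: `f^{(i,j)} = f^{(j,i)}` for all `i,j`. -/
def IsCommutative' {n : ℕ} (f : (Fin n → Bool) → Fin n → Bool) : Prop :=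
  ∀ i j : Fin n, upd2 f {i} {j} = upd2 f {j} {i}

/-- `𝒜(x)`: the intersection of all members of `𝒜` containing `x`
(`= 𝔹^n` if no member contains `x`, since `⋂₀ ∅ = univ`). -/
def collAt {n : ℕ} (𝒜 : Set (Set (Fin n → Bool))) (x : Fin n → Bool) :
    Set (Fin n → Bool) :=
  ⋂₀ {A ∈ 𝒜 | x ∈ A}

/-- The network `F(𝒜)`, characterised by `[x, F(𝒜)(x)] = 𝒜(x)`. -/
noncomputable def Fnet {n : ℕ} (𝒜 : Set (Set (Fin n → Bool))) :
    (Fin n → Bool) → Fin n → Bool :=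
  fun x => opp (collAt 𝒜 x) x

/-- A collection of subcubes is pre-principal if `𝒬 = {𝒬(x) : x ∈ 𝔹^n}`. -/
def PrePrincipal {n : ℕ} (𝒬 : Set (Set (Fin n → Bool))) : Prop :=
  𝒬 = {X | ∃ x, X = collAt 𝒬 x}

/-- `λ(𝒜)`: unions of subcollections of `𝒜` that are subcubes. -/
def lamColl {n : ℕ} (𝒜 : Set (Set (Fin n → Bool))) : Set (Set (Fin n → Bool)) :=
  {X | ∃ ℛ ⊆ 𝒜, X = ⋃₀ ℛ ∧ IsSubcube X}

/-- `μ(𝒜) = {𝒜(x) : x ∈ 𝔹^n}`. -/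
def muColl {n : ℕ} (𝒜 : Set (Set (Fin n → Bool))) : Set (Set (Fin n → Bool)) :=
  {X | ∃ x, X = collAt 𝒜 x}

/-- A pre-ideal collection of subcubes. -/
def PreIdeal {n : ℕ} (𝒥 : Set (Set (Fin n → Bool))) : Prop :=
  Set.univ ∈ 𝒥 ∧
  (∀ A ∈ 𝒥, ∀ B ∈ 𝒥, (A ∩ B).Nonempty → A ∩ B ∈ 𝒥) ∧
  (∀ ℛ ⊆ 𝒥, IsSubcube (⋃₀ ℛ) → ⋃₀ ℛ ∈ 𝒥)

/-- The collection of minimal trapspaces of `f`. -/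
def MT {n : ℕ} (f : (Fin n → Bool) → Fin n → Bool) : Set (Set (Fin n → Bool)) :=
  {X | IsTrapspace f X ∧ ∀ Y, IsTrapspace f Y → ¬ Y ⊂ X}

/-- `M(f)`: the union of the minimal trapspaces of `f`. -/
def Mset {n : ℕ} (f : (Fin n → Bool) → Fin n → Bool) : Set (Fin n → Bool) :=
  ⋃₀ MT f

-- The min-trapping extension `f^M`: `[x, f^M(x)] = T_f(x)` if `x ∈ M(f)`,
-- and `f^M(x) = ¬x` otherwise.
open scoped Classical in
noncomputable def minExt {n : ℕ} (f : (Fin n → Bool) → Fin n → Bool) :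
    (Fin n → Bool) → Fin n → Bool :=
  fun x => if x ∈ Mset f then opp (Tprin f x) x else fun i => !(x i)

lemma ga_iff {n : ℕ} (f : (Fin n → Bool) → Fin n → Bool) (x y : Fin n → Bool) :
    GA f x y ↔ ∀ i, y i = x i ∨ y i = f x i := by
  constructor
  · rintro ⟨S, rfl⟩ i
    by_cases h : i ∈ S
    · exact Or.inr (by simp [upd, h])
    · exact Or.inl (by simp [upd, h])
  · intro h
    classical
    refine ⟨Finset.univ.filter (fun i => y i ≠ x i), funext fun i => ?_⟩
    by_cases hi : y i = x i
    · simp [upd, hi]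
    · rcases h i with h' | h'
      · exact absurd h' hi
      · rw [h']; simp [upd, Finset.mem_filter, hi]

/-- A graph `Γ` on `𝔹^n` is the general asynchronous graph of some
Boolean network iff it is reflexive and all its out-neighbourhoods are subcubes. -/
theorem stmt0 (n : ℕ) (Γ : (Fin n → Bool) → (Fin n → Bool) → Prop) :
    (∃ f : (Fin n → Bool) → Fin n → Bool, ∀ x y, Γ x y ↔ GA f x y) ↔
      (Reflexive Γ ∧ ∀ x, IsSubcube {y | Γ x y}) := by
  constructor
  · rintro ⟨f, hf⟩
    constructor
    · intro x
      exact (hf x x).mpr ⟨∅, funext fun i => by simp [upd]⟩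
    · intro x
      refine ⟨{i | x i = false ∧ f x i = false}, {i | x i = true ∧ f x i = true},
        ?_, ?_⟩
      · rw [Set.disjoint_left]
        rintro i ⟨h1, _⟩ ⟨h2, _⟩
        rw [h1] at h2; exact Bool.false_ne_true h2
      · ext y
        simp only [Set.mem_setOf_eq, hf, ga_iff]
        constructor
        · intro h
          refine ⟨fun i hi => ?_, fun i hi => ?_⟩
          · rcases h i with h' | h' <;> rw [h'] <;> [exact hi.1; exact hi.2]
          · rcases h i with h' | h' <;> rw [h'] <;> [exact hi.1; exact hi.2]
        · rintro ⟨h0, h1⟩ i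
          rcases hx : x i with _ | _ <;> rcases hfx : f x i with _ | _
          · exact Or.inl (h0 i ⟨hx, hfx⟩)
          · rcases hy : y i with _ | _
            · exact Or.inl rfl
            · exact Or.inr rfl
          · rcases hy : y i with _ | _
            · exact Or.inr rfl
            · exact Or.inl rfl
          · exact Or.inl (h1 i ⟨hx, hfx⟩)
  · rintro ⟨hrefl, hcube⟩
    classical
    refine ⟨fun x i => if ∃ y, Γ x y ∧ y i ≠ x i then !(x i) else x i, fun x y => ?_⟩
    rw [ga_iff]
    obtain ⟨S, T, hdisj, hST⟩ := hcube x
    have hx : x ∈ {y | Γ x y} := hrefl x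
    rw [hST] at hx
    constructor
    · intro hΓ i
      by_cases hi : y i = x i
      · exact Or.inl hi
      · refine Or.inr ?_
        have : ∃ z, Γ x z ∧ z i ≠ x i := ⟨y, hΓ, hi⟩
        simp only [this, if_true]
        cases hy : y i <;> cases hxx : x i <;> simp_all
    · intro h
      have : y ∈ {z | Γ x z} := by
        rw [hST]
        constructor
        · intro i hi
          rcases h i with h' | h'
          · rw [h']; exact hx.1 i hi
          · by_cases hw : ∃ z, Γ x z ∧ z i ≠ x i
            · obtain ⟨z, hz, hzi⟩ := hw
              have : z ∈ {w | Γ x w} := hz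
              rw [hST] at this
              exact absurd ((this.1 i hi).trans (hx.1 i hi).symm) hzi
            · rw [h']; simp only [hw, if_false]; exact hx.1 i hi
        · intro i hi
          rcases h i with h' | h'
          · rw [h']; exact hx.2 i hi
          · by_cases hw : ∃ z, Γ x z ∧ z i ≠ x i
            · obtain ⟨z, hz, hzi⟩ := hw
              have : z ∈ {w | Γ x w} := hz
              rw [hST] at this
              exact absurd ((this.2 i hi).trans (hx.2 i hi).symm) hzi
            · rw [h']; simp only [hw, if_false]; exact hx.2 i hi
      exact this
end

section
/- The operator f ↦ f^T is a closure operator on Boolean networks of dimension n with respect to the order ⊑: for all Boolean networks f, g of dimension n, (1) f ⊑ f^T; (2) if f ⊑ g then f^T ⊑ g^T; (3) (f^T)^T = f^T. -/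
lemma mem_Tprin_self {n : ℕ} (f : (Fin n → Bool) → Fin n → Bool) (x : Fin n → Bool) :
    x ∈ Tprin f x := fun _ hX => hX.2

lemma f_mem_Tprin {n : ℕ} (f : (Fin n → Bool) → Fin n → Bool) (x : Fin n → Bool) :
    f x ∈ Tprin f x := fun _ hX => hX.1.2 x hX.2

lemma Tprin_subset {n : ℕ} (f : (Fin n → Bool) → Fin n → Bool) (x : Fin n → Bool)
    {X : Set (Fin n → Bool)} (hX : IsTrapspace f X) (hx : x ∈ X) :
    Tprin f x ⊆ X := Set.sInter_subset_of_mem ⟨hX, hx⟩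

lemma delta_trapClosure {n : ℕ} (f : (Fin n → Bool) → Fin n → Bool) (x : Fin n → Bool)
    (i : Fin n) : i ∈ delta x (trapClosure f x) ↔ ∃ y ∈ Tprin f x, y i ≠ x i := by
  classical
  simp only [delta, trapClosure, opp, Set.mem_setOf_eq]
  by_cases h : ∃ y ∈ Tprin f x, y i ≠ x i <;> simp [h]

lemma trapspace_anti {n : ℕ} {f g : (Fin n → Bool) → Fin n → Bool} (hfg : BNle f g)
    {X : Set (Fin n → Bool)} (hX : IsTrapspace g X) : IsTrapspace f X := by
  obtain ⟨hsc, hinv⟩ := hX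
  refine ⟨hsc, fun x hx => ?_⟩
  obtain ⟨S, T, -, hXeq⟩ := hsc
  have hgx := hinv x hx
  rw [hXeq] at hx hgx ⊢
  constructor
  · intro i hi
    have hxi : x i = false := hx.1 i hi
    have : i ∉ delta x (f x) := fun hmem => (hfg x hmem) (by
      simp [delta, hxi, hgx.1 i hi])
    simpa [delta, hxi] using this
  · intro i hi
    have hxi : x i = true := hx.2 i hi
    have : i ∉ delta x (f x) := fun hmem => (hfg x hmem) (by
      simp [delta, hxi, hgx.2 i hi])
    simpa [delta, hxi] using this

lemma le_trapClosure {n : ℕ} (f : (Fin n → Bool) → Fin n → Bool) :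
    BNle f (trapClosure f) := by
  intro x i hi
  rw [delta_trapClosure]
  exact ⟨f x, f_mem_Tprin f x, fun h => hi h.symm⟩

lemma trapspace_iff {n : ℕ} (f : (Fin n → Bool) → Fin n → Bool)
    (X : Set (Fin n → Bool)) : IsTrapspace (trapClosure f) X ↔ IsTrapspace f X := by
  constructor
  · exact trapspace_anti (le_trapClosure f)
  · rintro ⟨hsc, hinv⟩
    refine ⟨hsc, fun x hx => ?_⟩
    have hsub : Tprin f x ⊆ X := Tprin_subset f x ⟨hsc, hinv⟩ hx
    obtain ⟨S, T, -, hXeq⟩ := hsc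
    rw [hXeq] at hx ⊢
    constructor
    · intro i hi
      have : i ∉ delta x (trapClosure f x) := by
        rw [delta_trapClosure]
        rintro ⟨y, hy, hyi⟩
        exact hyi (by rw [hXeq] at hsub; rw [(hsub hy).1 i hi, hx.1 i hi])
      simpa [delta, hx.1 i hi] using this
    · intro i hi
      have : i ∉ delta x (trapClosure f x) := by
        rw [delta_trapClosure]
        rintro ⟨y, hy, hyi⟩
        exact hyi (by rw [hXeq] at hsub; rw [(hsub hy).2 i hi, hx.2 i hi])
      simpa [delta, hx.2 i hi] using this

/-- the trapping closure is a closure operator for `⊑`. -/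
theorem stmt1 (n : ℕ) (f g : (Fin n → Bool) → Fin n → Bool) :
    BNle f (trapClosure f) ∧
    (BNle f g → BNle (trapClosure f) (trapClosure g)) ∧
    trapClosure (trapClosure f) = trapClosure f := by
  refine ⟨le_trapClosure f, fun hfg x i hi => ?_, ?_⟩
  · rw [delta_trapClosure] at hi ⊢
    obtain ⟨y, hy, hyi⟩ := hi
    refine ⟨y, fun X hX => hy X ⟨trapspace_anti hfg hX.1, hX.2⟩, hyi⟩
  · have hT : ∀ x, Tprin (trapClosure f) x = Tprin f x := by
      intro x
      unfold Tprin
      ext X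
      simp [trapspace_iff]
    funext x
    simp [trapClosure, hT]
end

section
/- For every Boolean network f of dimension n, the following seven conditions are equivalent: (1) GA(f) is transitive; (2) for all x ∈ 𝔹^n and all y ∈ [x, f(x)], [y, f(y)] ⊆ [x, f(x)]; (3) [x, f(x)] = T_f(x) for all x ∈ 𝔹^n; (4) f = f^T; (5) f = g^T for some Boolean network g of dimension n; (6) TG(f) = GA(f); (7) f^{(S,T)} ⊑ f^{(S∪T)} for all S, T ⊆ [n]. -/
section Aux

variable {n : ℕ}

lemma bool_eq_of_ne_of_ne {p q r : Bool} (h1 : p ≠ r) (h2 : q ≠ r) : p = q := by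
  revert h1 h2; revert p q r; decide

lemma self_mem_interval (x y : Fin n → Bool) : x ∈ interval x y := by
  intro i hi; exact absurd rfl hi

lemma right_mem_interval (x y : Fin n → Bool) : y ∈ interval x y := fun _ hi => hi

lemma isSubcube_deltaSub (x : Fin n → Bool) (D : Set (Fin n)) :
    IsSubcube {z | delta x z ⊆ D} := by
  refine ⟨{i | i ∉ D ∧ x i = false}, {i | i ∉ D ∧ x i = true}, ?_, ?_⟩
  · rw [Set.disjoint_left]; rintro i ⟨h1, h2⟩ ⟨h3, h4⟩; simp_all
  · ext z
    simp only [Set.mem_setOf_eq]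
    constructor
    · intro hz
      constructor
      · rintro i ⟨hiD, hx⟩
        have : i ∉ delta x z := fun h => hiD (hz h)
        simp only [delta, Set.mem_setOf_eq, not_not] at this
        rw [← this, hx]
      · rintro i ⟨hiD, hx⟩
        have : i ∉ delta x z := fun h => hiD (hz h)
        simp only [delta, Set.mem_setOf_eq, not_not] at this
        rw [← this, hx]
    · rintro ⟨h0, h1⟩ i hi
      by_contra hiD
      cases hx : x i
      · have := h0 i ⟨hiD, hx⟩
        exact hi (by rw [hx, this])
      · have := h1 i ⟨hiD, hx⟩
        exact hi (by rw [hx, this])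

lemma delta_opp (X : Set (Fin n → Bool)) (x : Fin n → Bool) :
    delta x (opp X x) = {i | ∃ y ∈ X, y i ≠ x i} := by
  classical
  ext i
  simp only [delta, opp, Set.mem_setOf_eq]
  split_ifs with h
  · exact iff_of_true (by cases x i <;> simp) h
  · exact iff_of_false (by simp) h

lemma subcube_eq_interval {X : Set (Fin n → Bool)} (hX : IsSubcube X)
    {x : Fin n → Bool} (hx : x ∈ X) : X = interval x (opp X x) := by
  obtain ⟨S, T, -, rfl⟩ := hX
  ext z
  simp only [interval, Set.mem_setOf_eq, delta_opp]
  constructor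
  · rintro ⟨h0, h1⟩ i hi
    exact ⟨z, ⟨h0, h1⟩, fun h => hi (by rw [h])⟩
  · intro hz
    constructor
    · intro i hiS
      by_contra hzi
      have hxi : x i = false := hx.1 i hiS
      have : x i ≠ z i := fun h => hzi (by rw [← h, hxi])
      obtain ⟨y, hy, hyi⟩ := hz this
      exact hyi (by rw [hy.1 i hiS, hxi])
    · intro i hiT
      by_contra hzi
      have hxi : x i = true := hx.2 i hiT
      have : x i ≠ z i := fun h => hzi (by rw [← h, hxi])
      obtain ⟨y, hy, hyi⟩ := hz this
      exact hyi (by rw [hy.2 i hiT, hxi])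

lemma sInter_eq_deltaSub (𝒮 : Set (Set (Fin n → Bool))) (x : Fin n → Bool)
    (h : ∀ X ∈ 𝒮, IsSubcube X ∧ x ∈ X) :
    ⋂₀ 𝒮 = {z | delta x z ⊆ ⋂ X ∈ 𝒮, delta x (opp X x)} := by
  ext z
  simp only [Set.mem_sInter, Set.mem_setOf_eq, Set.subset_def, Set.mem_iInter]
  constructor
  · intro hz i hi X hX
    have hzX : z ∈ interval x (opp X x) := by
      rw [← subcube_eq_interval (h X hX).1 (h X hX).2]; exact hz X hX
    exact hzX hi
  · intro hz X hX
    rw [subcube_eq_interval (h X hX).1 (h X hX).2]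
    intro i hi
    exact hz i hi X hX

lemma isTrapspace_univ (f : (Fin n → Bool) → Fin n → Bool) :
    IsTrapspace f Set.univ := by
  refine ⟨⟨∅, ∅, Set.disjoint_empty _, ?_⟩, fun _ _ => Set.mem_univ _⟩
  ext z; simp

lemma mem_tprin (f : (Fin n → Bool) → Fin n → Bool) (x : Fin n → Bool) :
    x ∈ Tprin f x := by
  intro X hX; exact hX.2

lemma tprin_subset {f : (Fin n → Bool) → Fin n → Bool} {x : Fin n → Bool}
    {X : Set (Fin n → Bool)} (hX : IsTrapspace f X) (hx : x ∈ X) :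
    Tprin f x ⊆ X :=
  Set.sInter_subset_of_mem ⟨hX, hx⟩

lemma isTrapspace_tprin (f : (Fin n → Bool) → Fin n → Bool) (x : Fin n → Bool) :
    IsTrapspace f (Tprin f x) := by
  constructor
  · have h : ∀ X ∈ {X | IsTrapspace f X ∧ x ∈ X}, IsSubcube X ∧ x ∈ X :=
      fun X hX => ⟨hX.1.1, hX.2⟩
    rw [Tprin, sInter_eq_deltaSub _ x h]
    exact isSubcube_deltaSub x _
  · intro y hy X hX
    exact hX.1.2 y (hy X hX)

lemma interval_subset_of_subcube {X : Set (Fin n → Bool)} (hX : IsSubcube X)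
    {x y : Fin n → Bool} (hx : x ∈ X) (hy : y ∈ X) : interval x y ⊆ X := by
  rw [subcube_eq_interval hX hx] at hy ⊢
  intro z hz i hi
  exact hy (hz hi)

lemma interval_subset_tprin (f : (Fin n → Bool) → Fin n → Bool) (x : Fin n → Bool) :
    interval x (f x) ⊆ Tprin f x :=
  interval_subset_of_subcube (isTrapspace_tprin f x).1 (mem_tprin f x)
    ((isTrapspace_tprin f x).2 x (mem_tprin f x))

lemma tprin_eq_interval_trapClosure (f : (Fin n → Bool) → Fin n → Bool)
    (x : Fin n → Bool) : Tprin f x = interval x (trapClosure f x) :=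
  subcube_eq_interval (isTrapspace_tprin f x).1 (mem_tprin f x)

lemma eq_of_interval_eq {x a b : Fin n → Bool}
    (h : interval x a = interval x b) : a = b := by
  have ha : a ∈ interval x b := h ▸ right_mem_interval x a
  have hb : b ∈ interval x a := h ▸ right_mem_interval x b
  funext i
  by_cases h1 : x i = a i
  · by_cases h2 : x i = b i
    · rw [← h1, ← h2]
    · exact absurd (hb h2) (by simp [delta, h1])
  · have := ha h1
    exact bool_eq_of_ne_of_ne (Ne.symm h1) (Ne.symm this)

lemma delta_upd (f : (Fin n → Bool) → Fin n → Bool) (S : Finset (Fin n))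
    (x : Fin n → Bool) : delta x (upd f S x) = ↑S ∩ delta x (f x) := by
  ext i
  simp only [delta, upd, Set.mem_setOf_eq, Set.mem_inter_iff, Finset.mem_coe]
  by_cases h : i ∈ S <;> simp [h]

lemma eq_upd_of_mem_interval {f : (Fin n → Bool) → Fin n → Bool}
    {x y : Fin n → Bool} (hy : y ∈ interval x (f x)) :
    y = upd f (Finset.univ.filter (fun i => x i ≠ y i)) x := by
  funext i
  simp only [upd, Finset.mem_filter, Finset.mem_univ, true_and]
  split_ifs with h
  · exact bool_eq_of_ne_of_ne (Ne.symm h) (Ne.symm (hy h))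
  · exact (not_ne_iff.mp h).symm

lemma GA_iff {f : (Fin n → Bool) → Fin n → Bool} {x y : Fin n → Bool} :
    GA f x y ↔ y ∈ interval x (f x) := by
  constructor
  · rintro ⟨S, rfl⟩
    show delta x _ ⊆ _
    rw [delta_upd]
    exact Set.inter_subset_right
  · intro hy
    exact ⟨_, eq_upd_of_mem_interval hy⟩

lemma trapspace_trapClosure_iff (g : (Fin n → Bool) → Fin n → Bool)
    (X : Set (Fin n → Bool)) :
    IsTrapspace g X ↔ IsTrapspace (trapClosure g) X := by
  constructor
  · intro hX
    refine ⟨hX.1, fun y hy => ?_⟩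
    have : trapClosure g y ∈ Tprin g y := by
      rw [tprin_eq_interval_trapClosure]; exact right_mem_interval _ _
    exact tprin_subset hX hy this
  · intro hX
    refine ⟨hX.1, fun y hy => ?_⟩
    have h1 : g y ∈ Tprin g y := (isTrapspace_tprin g y).2 y (mem_tprin g y)
    rw [tprin_eq_interval_trapClosure] at h1
    exact interval_subset_of_subcube hX.1 hy (hX.2 y hy) h1

lemma tprin_trapClosure (g : (Fin n → Bool) → Fin n → Bool) (x : Fin n → Bool) :
    Tprin (trapClosure g) x = Tprin g x := by
  have h : {X | IsTrapspace (trapClosure g) X ∧ x ∈ X} =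
      {X | IsTrapspace g X ∧ x ∈ X} := by
    ext X
    simp only [Set.mem_setOf_eq, ← trapspace_trapClosure_iff]
  rw [Tprin, Tprin, h]

lemma delta_triangle (a b c : Fin n → Bool) : delta a c ⊆ delta a b ∪ delta b c := by
  intro i hi
  by_cases h : a i = b i
  · right; intro hbc; exact hi (h.trans hbc)
  · left; exact h

end Aux


/-- seven equivalent definitions of trapping networks. -/
theorem stmt2 (n : ℕ) (f : (Fin n → Bool) → Fin n → Bool) :
    List.TFAE [
      Transitive (GA f),
      ∀ x : Fin n → Bool, ∀ y ∈ interval x (f x), interval y (f y) ⊆ interval x (f x),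
      ∀ x : Fin n → Bool, interval x (f x) = Tprin f x,
      f = trapClosure f,
      ∃ g : (Fin n → Bool) → Fin n → Bool, f = trapClosure g,
      TG f = GA f,
      ∀ S T : Finset (Fin n), BNle (upd2 f S T) (upd f (S ∪ T))
    ] := by
  tfae_have 1 → 2 := by
    intro h1 x y hy z hz
    exact GA_iff.mp (h1 (GA_iff.mpr hy) (GA_iff.mpr hz))
  tfae_have 2 → 1 := by
    intro h2 x y z hxy hyz
    exact GA_iff.mpr (h2 x y (GA_iff.mp hxy) (GA_iff.mp hyz))
  tfae_have 2 → 3 := by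
    intro h2 x
    refine Set.Subset.antisymm (interval_subset_tprin f x) ?_
    refine tprin_subset ⟨?_, ?_⟩ (self_mem_interval x (f x))
    · exact isSubcube_deltaSub x (delta x (f x))
    · intro y hy
      exact h2 x y hy (right_mem_interval y (f y))
  tfae_have 3 → 2 := by
    intro h3 x y hy z hz
    rw [h3 x] at hy ⊢
    exact tprin_subset (isTrapspace_tprin f x) hy
      (interval_subset_tprin f y hz)
  tfae_have 3 → 4 := by
    intro h3
    funext x
    exact eq_of_interval_eq ((h3 x).trans (tprin_eq_interval_trapClosure f x))
  tfae_have 4 → 5 := fun h4 => ⟨f, h4⟩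
  tfae_have 5 → 3 := by
    rintro ⟨g, rfl⟩ x
    rw [tprin_trapClosure, tprin_eq_interval_trapClosure]
  tfae_have 3 → 6 := by
    intro h3
    funext x y
    unfold TG
    rw [← h3 x]
    exact propext GA_iff.symm
  tfae_have 6 → 3 := by
    intro h6 x
    ext y
    have : TG f x y ↔ GA f x y := by rw [h6]
    rw [← GA_iff, ← this]
    exact Iff.rfl.symm
  tfae_have 2 → 7 := by
    intro h2 S T x i hi
    have hy : upd f S x ∈ interval x (f x) := by
      show delta x _ ⊆ _
      rw [delta_upd]; exact Set.inter_subset_right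
    have hsub : delta (upd f S x) (f (upd f S x)) ⊆ delta x (f x) := by
      have h1 : delta (upd f S x) x ⊆ delta x (f x) := by
        intro j hj
        exact hy (Ne.symm hj)
      have h2' : delta x (f (upd f S x)) ⊆ delta x (f x) :=
        h2 x _ hy (right_mem_interval _ _)
      intro j hj
      rcases delta_triangle (upd f S x) x (f (upd f S x)) hj with h | h
      · exact h1 h
      · exact h2' h
    rw [delta_upd]
    have hi' : i ∈ delta x (upd2 f S T x) := hi
    rcases delta_triangle x (upd f S x) (upd2 f S T x) hi' with h | h
    · rw [delta_upd] at h
      exact ⟨Finset.mem_coe.mpr (Finset.mem_union_left T (Finset.mem_coe.mp h.1)), h.2⟩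
    · have h' : i ∈ delta (upd f S x) (upd f T (upd f S x)) := h
      rw [delta_upd] at h'
      exact ⟨Finset.mem_coe.mpr (Finset.mem_union_right S (Finset.mem_coe.mp h'.1)),
        hsub h'.2⟩
  tfae_have 7 → 2 := by
    classical
    intro h7 x y hy z hz
    have hyu := eq_upd_of_mem_interval hy
    have hzu := eq_upd_of_mem_interval hz
    set S := Finset.univ.filter (fun i => x i ≠ y i)
    set T := Finset.univ.filter (fun i => y i ≠ z i)
    have hz2 : z = upd2 f S T x := by
      rw [upd2, Function.comp_apply, ← hyu, ← hzu]
    have := h7 S T x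
    rw [← hz2] at this
    intro i hi
    have h' := this hi
    rw [delta_upd] at h'
    exact h'.2
  tfae_finish
end

section
/- A collection 𝒬 of subcubes of 𝔹^n is pre-principal (i.e. 𝒬 = {𝒬(x) : x ∈ 𝔹^n}) if and only if the following three conditions hold: (1) the union of all members of 𝒬 equals 𝔹^n; (2) for all A, B ∈ 𝒬 there exists 𝒞 ⊆ 𝒬 whose union equals A ∩ B; (3) for all A ∈ 𝒬 and all 𝒞 ⊆ 𝒬, if the union of 𝒞 equals A then A ∈ 𝒞. -/
/-- combinatorial characterisation of pre-principal collections. -/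
theorem stmt4 (n : ℕ) (𝒬 : Set (Set (Fin n → Bool))) (h𝒬 : ∀ A ∈ 𝒬, IsSubcube A) :
    PrePrincipal 𝒬 ↔
      (⋃₀ 𝒬 = Set.univ ∧
       (∀ A ∈ 𝒬, ∀ B ∈ 𝒬, ∃ 𝒞 ⊆ 𝒬, ⋃₀ 𝒞 = A ∩ B) ∧
       (∀ A ∈ 𝒬, ∀ 𝒞 ⊆ 𝒬, ⋃₀ 𝒞 = A → A ∈ 𝒞)) := by
  have hself : ∀ x : Fin n → Bool, x ∈ collAt 𝒬 x := fun x A hA => hA.2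
  constructor
  · intro hP
    have hsub : ∀ (x : Fin n → Bool) (A : Set (Fin n → Bool)), A ∈ 𝒬 → x ∈ A →
        collAt 𝒬 x ⊆ A := fun x A hA hx => Set.sInter_subset_of_mem ⟨hA, hx⟩
    have hmem : ∀ x, collAt 𝒬 x ∈ 𝒬 := fun x => by
      have : collAt 𝒬 x ∈ {X | ∃ x, X = collAt 𝒬 x} := ⟨x, rfl⟩
      rwa [← hP] at this
    refine ⟨?_, ?_, ?_⟩
    · ext x
      simp only [Set.mem_univ, iff_true, Set.mem_sUnion]
      exact ⟨collAt 𝒬 x, hmem x, hself x⟩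
    · intro A hA B hB
      refine ⟨{X | ∃ x ∈ A ∩ B, X = collAt 𝒬 x}, ?_, ?_⟩
      · rintro X ⟨x, _, rfl⟩; exact hmem x
      · ext y
        constructor
        · rintro ⟨X, ⟨x, hx, rfl⟩, hy⟩
          exact ⟨hsub x A hA hx.1 hy, hsub x B hB hx.2 hy⟩
        · intro hy
          exact ⟨collAt 𝒬 y, ⟨y, hy, rfl⟩, hself y⟩
    · intro A hA 𝒞 h𝒞 hU
      obtain ⟨x, rfl⟩ : ∃ x, A = collAt 𝒬 x := by rw [hP] at hA; exact hA
      clear hA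
      have hx : x ∈ ⋃₀ 𝒞 := hU ▸ hself x
      obtain ⟨C, hC𝒞, hxC⟩ := hx
      have hs1 : collAt 𝒬 x ⊆ C := hsub x C (h𝒞 hC𝒞) hxC
      have hs2 : C ⊆ collAt 𝒬 x := hU ▸ Set.subset_sUnion_of_mem hC𝒞
      exact Set.Subset.antisymm hs2 hs1 ▸ hC𝒞
  · rintro ⟨h1, h2, h3⟩
    have hsub : ∀ (x : Fin n → Bool) (A : Set (Fin n → Bool)), A ∈ 𝒬 → x ∈ A →
        collAt 𝒬 x ⊆ A := fun x A hA hx => Set.sInter_subset_of_mem ⟨hA, hx⟩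
    have hmem : ∀ x, collAt 𝒬 x ∈ 𝒬 := by
      intro x
      have hne : ({A ∈ 𝒬 | x ∈ A} : Set (Set (Fin n → Bool))).Nonempty := by
        have hx : x ∈ ⋃₀ 𝒬 := h1 ▸ Set.mem_univ x
        obtain ⟨A, hA, hxA⟩ := hx
        exact ⟨A, hA, hxA⟩
      obtain ⟨C, hC, hmin⟩ : ∃ C ∈ ({A ∈ 𝒬 | x ∈ A} : Set (Set (Fin n → Bool))),
          ∀ D ∈ ({A ∈ 𝒬 | x ∈ A} : Set (Set (Fin n → Bool))), id D ≤ id C → id C = id D := by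
        obtain ⟨C, hC⟩ := (Set.toFinite {A ∈ 𝒬 | x ∈ A}).exists_minimal hne
        exact ⟨C, hC.1, fun D hD hle => le_antisymm (hC.2 hD hle) hle⟩
      have hCall : ∀ A ∈ ({A ∈ 𝒬 | x ∈ A} : Set (Set (Fin n → Bool))), C ⊆ A := by
        intro A hA
        obtain ⟨𝒞, h𝒞, hU⟩ := h2 C hC.1 A hA.1
        have hx : x ∈ C ∩ A := ⟨hC.2, hA.2⟩
        rw [← hU] at hx
        obtain ⟨D, hD𝒞, hxD⟩ := hx
        have hDsub : D ⊆ C ∩ A := hU ▸ Set.subset_sUnion_of_mem hD𝒞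
        have hCD : C = D :=
          hmin D ⟨h𝒞 hD𝒞, hxD⟩ (hDsub.trans Set.inter_subset_left)
        rw [hCD]
        exact hDsub.trans Set.inter_subset_right
      have hEq : collAt 𝒬 x = C := by
        apply Set.Subset.antisymm
        · exact Set.sInter_subset_of_mem hC
        · intro y hy A hA
          exact hCall A hA hy
      rw [hEq]; exact hC.1
    apply Set.Subset.antisymm
    · intro A hA
      have hU : ⋃₀ {X | ∃ x ∈ A, X = collAt 𝒬 x} = A := by
        ext y
        constructor
        · rintro ⟨X, ⟨x, hx, rfl⟩, hy⟩
          exact hsub x A hA hx hy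
        · intro hy
          exact ⟨collAt 𝒬 y, ⟨y, hy, rfl⟩, hself y⟩
      have := h3 A hA {X | ∃ x ∈ A, X = collAt 𝒬 x}
        (by rintro X ⟨x, _, rfl⟩; exact hmem x) hU
      obtain ⟨x, _, hEq⟩ := this
      exact ⟨x, hEq⟩
    · rintro A ⟨x, rfl⟩
      exact hmem x
end

section
/- For every pre-principal collection 𝒬 of subcubes of 𝔹^n and every pre-ideal collection 𝒥 of subcubes of 𝔹^n: λ(𝒬) = Trapspaces(F(𝒬)) and μ(𝒥) = PT(F(𝒥)). Consequently, μ(λ(𝒬)) = 𝒬 and λ(μ(𝒥)) = 𝒥. -/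
/-! ### Auxiliary lemmas -/

lemma mem_collAt_self {n : ℕ} (𝒜 : Set (Set (Fin n → Bool))) (x : Fin n → Bool) :
    x ∈ collAt 𝒜 x := by
  intro A hA; exact hA.2

lemma collAt_subset {n : ℕ} {𝒜 : Set (Set (Fin n → Bool))} {A : Set (Fin n → Bool)}
    {x : Fin n → Bool} (hA : A ∈ 𝒜) (hx : x ∈ A) : collAt 𝒜 x ⊆ A :=
  Set.sInter_subset_of_mem ⟨hA, hx⟩

lemma sInter_isSubcube {n : ℕ} (F : Set (Set (Fin n → Bool))) (x : Fin n → Bool)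
    (hsub : ∀ A ∈ F, IsSubcube A) (hx : ∀ A ∈ F, x ∈ A) : IsSubcube (⋂₀ F) := by
  refine ⟨{i | (∃ A ∈ F, ∀ z ∈ A, z i = x i) ∧ x i = false},
          {i | (∃ A ∈ F, ∀ z ∈ A, z i = x i) ∧ x i = true}, ?_, ?_⟩
  · rw [Set.disjoint_left]
    rintro i ⟨-, hf⟩ ⟨-, ht⟩
    rw [hf] at ht; exact Bool.false_ne_true ht
  · ext z
    simp only [Set.mem_sInter, Set.mem_setOf_eq]
    constructor
    · intro hz
      constructor
      · rintro i ⟨⟨A, hA, hfix⟩, hval⟩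
        rw [hfix z (hz A hA)]; exact hval
      · rintro i ⟨⟨A, hA, hfix⟩, hval⟩
        rw [hfix z (hz A hA)]; exact hval
    · rintro ⟨h0, h1⟩ A hA
      obtain ⟨S, T, hd, hAe⟩ := hsub A hA
      have hxA := hx A hA
      rw [hAe] at hxA ⊢
      constructor
      · intro i hi
        have hfix : ∀ w ∈ A, w i = x i := by
          intro w hw
          rw [hAe] at hw
          rw [hw.1 i hi, hxA.1 i hi]
        exact h0 i ⟨⟨A, hA, hfix⟩, hxA.1 i hi⟩
      · intro i hi
        have hfix : ∀ w ∈ A, w i = x i := by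
          intro w hw
          rw [hAe] at hw
          rw [hw.2 i hi, hxA.2 i hi]
        exact h1 i ⟨⟨A, hA, hfix⟩, hxA.2 i hi⟩

lemma collAt_isSubcube {n : ℕ} {𝒜 : Set (Set (Fin n → Bool))}
    (hsub : ∀ A ∈ 𝒜, IsSubcube A) (x : Fin n → Bool) : IsSubcube (collAt 𝒜 x) :=
  sInter_isSubcube _ x (fun A hA => hsub A hA.1) (fun _ hA => hA.2)

lemma interval_opp {n : ℕ} {X : Set (Fin n → Bool)} {x : Fin n → Bool}
    (hX : IsSubcube X) (hx : x ∈ X) : interval x (opp X x) = X := by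
  classical
  have hdelta : ∀ i, (x i ≠ opp X x i) ↔ ∃ y ∈ X, y i ≠ x i := by
    intro i
    unfold opp
    by_cases h : ∃ y ∈ X, y i ≠ x i
    · simp [h, Bool.eq_not_iff]
    · simp [h]
  obtain ⟨S, T, hd, hXe⟩ := hX
  ext z
  simp only [interval, Set.mem_setOf_eq, delta, Set.setOf_subset_setOf]
  constructor
  · intro hz
    rw [hXe] at hx ⊢
    constructor
    · intro i hi
      by_contra hne
      have hxz : x i ≠ z i := by rw [hx.1 i hi]; exact fun he => hne he.symm
      obtain ⟨y, hy, hyne⟩ := (hdelta i).1 (hz i hxz)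
      rw [hXe] at hy
      exact hyne (by rw [hy.1 i hi, hx.1 i hi])
    · intro i hi
      by_contra hne
      have hxz : x i ≠ z i := by rw [hx.2 i hi]; exact fun he => hne he.symm
      obtain ⟨y, hy, hyne⟩ := (hdelta i).1 (hz i hxz)
      rw [hXe] at hy
      exact hyne (by rw [hy.2 i hi, hx.2 i hi])
  · intro hz i hi
    exact (hdelta i).2 ⟨z, hz, fun he => hi he.symm⟩

lemma interval_Fnet {n : ℕ} {𝒜 : Set (Set (Fin n → Bool))}
    (hsub : ∀ A ∈ 𝒜, IsSubcube A) (x : Fin n → Bool) :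
    interval x (Fnet 𝒜 x) = collAt 𝒜 x :=
  interval_opp (collAt_isSubcube hsub x) (mem_collAt_self 𝒜 x)

lemma Fnet_mem_collAt {n : ℕ} {𝒜 : Set (Set (Fin n → Bool))}
    (hsub : ∀ A ∈ 𝒜, IsSubcube A) (x : Fin n → Bool) : Fnet 𝒜 x ∈ collAt 𝒜 x := by
  rw [← interval_Fnet hsub x]
  exact fun i hi => hi

lemma interval_subset_subcube {n : ℕ} {X : Set (Fin n → Bool)} {x y : Fin n → Bool}
    (hX : IsSubcube X) (hx : x ∈ X) (hy : y ∈ X) : interval x y ⊆ X := by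
  have hXe := interval_opp hX hx
  intro z hz
  rw [← hXe]
  rw [← hXe] at hy
  have hy' : delta x y ⊆ delta x (opp X x) := hy
  have hz' : delta x z ⊆ delta x y := hz
  exact Set.Subset.trans hz' hy'

lemma collAt_trans {n : ℕ} {𝒜 : Set (Set (Fin n → Bool))} {x y : Fin n → Bool}
    (h : y ∈ collAt 𝒜 x) : collAt 𝒜 y ⊆ collAt 𝒜 x := by
  intro z hz A hA
  exact hz A ⟨hA.1, h A hA⟩

lemma Tprin_Fnet {n : ℕ} {𝒜 : Set (Set (Fin n → Bool))}
    (hsub : ∀ A ∈ 𝒜, IsSubcube A) (x : Fin n → Bool) :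
    Tprin (Fnet 𝒜) x = collAt 𝒜 x := by
  apply Set.Subset.antisymm
  · apply Set.sInter_subset_of_mem
    refine ⟨⟨collAt_isSubcube hsub x, ?_⟩, mem_collAt_self 𝒜 x⟩
    intro y hy
    exact collAt_trans hy (Fnet_mem_collAt hsub y)
  · intro z hz X hX
    have hsubX : collAt 𝒜 x ⊆ X := by
      rw [← interval_Fnet hsub x]
      exact interval_subset_subcube hX.1.1 hX.2 (hX.1.2 x hX.2)
    exact hsubX hz

lemma collAt_mem_preIdeal {n : ℕ} {𝒥 : Set (Set (Fin n → Bool))}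
    (h𝒥 : PreIdeal 𝒥) (x : Fin n → Bool) : collAt 𝒥 x ∈ 𝒥 := by
  classical
  have key : ∀ G : Set (Set (Fin n → Bool)), G.Finite →
      G ⊆ {A | A ∈ 𝒥 ∧ x ∈ A} → ⋂₀ G ∈ 𝒥 ∧ x ∈ ⋂₀ G := by
    intro G hG
    refine Set.Finite.induction_on (motive := fun G _ => G ⊆ {A | A ∈ 𝒥 ∧ x ∈ A} → ⋂₀ G ∈ 𝒥 ∧ x ∈ ⋂₀ G) G hG ?_ ?_
    · intro _
      simpa using h𝒥.1
    · intro A G' hA hG'fin ih hins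
      have hAmem : A ∈ 𝒥 ∧ x ∈ A := hins (Set.mem_insert A G')
      have hGsub : G' ⊆ {A | A ∈ 𝒥 ∧ x ∈ A} :=
        fun B hB => hins (Set.mem_insert_of_mem A hB)
      obtain ⟨hGJ, hxG⟩ := ih hGsub
      rw [Set.sInter_insert]
      exact ⟨h𝒥.2.1 A hAmem.1 _ hGJ ⟨x, hAmem.2, hxG⟩, hAmem.2, hxG⟩
  exact (key _ (Set.toFinite _) subset_rfl).1

/-- `λ(𝒬) = Trapspaces(F(𝒬))`, `μ(𝒥) = PT(F(𝒥))`, and `λ`, `μ`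
are mutually inverse between pre-principal and pre-ideal collections. -/
theorem stmt7 (n : ℕ) (𝒬 𝒥 : Set (Set (Fin n → Bool)))
    (h𝒬sub : ∀ A ∈ 𝒬, IsSubcube A) (h𝒬 : PrePrincipal 𝒬)
    (h𝒥sub : ∀ A ∈ 𝒥, IsSubcube A) (h𝒥 : PreIdeal 𝒥) :
    lamColl 𝒬 = trapspaces (Fnet 𝒬) ∧
    muColl 𝒥 = PT (Fnet 𝒥) ∧
    muColl (lamColl 𝒬) = 𝒬 ∧
    lamColl (muColl 𝒥) = 𝒥 := by
  -- Part 1: λ(𝒬) = Trapspaces(F(𝒬))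
  have hQ' : ∀ y : Fin n → Bool, collAt 𝒬 y ∈ 𝒬 := by
    intro y
    have h : collAt 𝒬 y ∈ {X | ∃ x, X = collAt 𝒬 x} := ⟨y, rfl⟩
    rwa [← h𝒬] at h
  have part1 : lamColl 𝒬 = trapspaces (Fnet 𝒬) := by
    ext X
    constructor
    · rintro ⟨ℛ, hℛ, rfl, hcube⟩
      refine ⟨hcube, ?_⟩
      intro x hx
      obtain ⟨A, hA, hxA⟩ := Set.mem_sUnion.1 hx
      exact Set.mem_sUnion.2
        ⟨A, hA, collAt_subset (hℛ hA) hxA (Fnet_mem_collAt h𝒬sub x)⟩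
    · rintro ⟨hcube, hinv⟩
      refine ⟨{Y | ∃ x ∈ X, Y = collAt 𝒬 x}, ?_, ?_, hcube⟩
      · rintro Y ⟨x, -, rfl⟩
        exact hQ' x
      · ext z
        constructor
        · intro hz
          exact Set.mem_sUnion.2 ⟨collAt 𝒬 z, ⟨z, hz, rfl⟩, mem_collAt_self 𝒬 z⟩
        · intro hz
          obtain ⟨Y, ⟨x, hx, rfl⟩, hzY⟩ := Set.mem_sUnion.1 hz
          have h2 : collAt 𝒬 x ⊆ X := by
            rw [← interval_Fnet h𝒬sub x]
            exact interval_subset_subcube hcube hx (hinv x hx)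
          exact h2 hzY
  -- Part 2: μ(𝒥) = PT(F(𝒥))
  have part2 : muColl 𝒥 = PT (Fnet 𝒥) := by
    ext X
    constructor
    · rintro ⟨x, rfl⟩
      exact ⟨x, (Tprin_Fnet h𝒥sub x).symm⟩
    · rintro ⟨x, rfl⟩
      exact ⟨x, (Tprin_Fnet h𝒥sub x)⟩
  refine ⟨part1, part2, ?_, ?_⟩
  -- Part 3: μ(λ(𝒬)) = 𝒬
  · have hcoll : ∀ x, collAt (lamColl 𝒬) x = collAt 𝒬 x := by
      intro x
      apply Set.Subset.antisymm
      · intro z hz A hA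
        exact hz A ⟨⟨{A}, by simpa using hA.1, by simp, h𝒬sub A hA.1⟩, hA.2⟩
      · intro z hz Y hY
        obtain ⟨⟨ℛ, hℛ, rfl, -⟩, hxY⟩ := hY
        obtain ⟨A, hA, hxA⟩ := Set.mem_sUnion.1 hxY
        exact Set.subset_sUnion_of_mem hA (collAt_subset (hℛ hA) hxA hz)
    have : muColl (lamColl 𝒬) = muColl 𝒬 := by
      unfold muColl
      ext X
      constructor
      · rintro ⟨x, rfl⟩; exact ⟨x, hcoll x⟩
      · rintro ⟨x, rfl⟩; exact ⟨x, (hcoll x).symm⟩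
    rw [this]
    exact h𝒬.symm
  -- Part 4: λ(μ(𝒥)) = 𝒥
  · apply Set.Subset.antisymm
    · rintro X ⟨ℛ, hℛ, rfl, hcube⟩
      refine h𝒥.2.2 ℛ ?_ hcube
      rintro Y hY
      obtain ⟨x, rfl⟩ := hℛ hY
      exact collAt_mem_preIdeal h𝒥 x
    · intro A hA
      refine ⟨{Y | ∃ x ∈ A, Y = collAt 𝒥 x}, ?_, ?_, h𝒥sub A hA⟩
      · rintro Y ⟨x, -, rfl⟩
        exact ⟨x, rfl⟩
      · ext z
        constructor
        · intro hz
          exact Set.mem_sUnion.2 ⟨collAt 𝒥 z, ⟨z, hz, rfl⟩, mem_collAt_self 𝒥 z⟩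
        · intro hz
          obtain ⟨Y, ⟨x, hx, rfl⟩, hzY⟩ := Set.mem_sUnion.1 hz
          exact collAt_subset hA hx hzY
end

section
/- Let f be a commutative Boolean network of dimension n, and for z ∈ 𝔹^n write δ_z = d_H(z, f(z)). Then for every x ∈ 𝔹^n and every y ∈ [x, f(x)]: d_H(x,y) ≥ δ_x − δ_y ≥ 0, and d_H(x,y) = δ_x − δ_y if and only if f(y) = f(x). -/
/-- Finset version of `delta`. -/
def Dset {n : ℕ} (x y : Fin n → Bool) : Finset (Fin n) :=
  Finset.univ.filter fun i => x i ≠ y i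

lemma mem_Dset {n : ℕ} {x y : Fin n → Bool} {i : Fin n} :
    i ∈ Dset x y ↔ x i ≠ y i := by simp [Dset]

lemma hdist_eq_card {n : ℕ} (x y : Fin n → Bool) :
    hdist x y = (Dset x y).card := by
  have h : delta x y = ↑(Dset x y) := by ext i; simp [delta, Dset]
  rw [hdist, h, Set.ncard_coe_finset]

lemma comm_step {n : ℕ} (f : (Fin n → Bool) → Fin n → Bool)
    (hf : IsCommutative' f) (x : Fin n → Bool) (i j : Fin n) (hij : j ≠ i) :
    f (upd f {i} x) j = f x j := by
  have h := congrFun (congrFun (hf i j) x) j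
  simpa [upd2, upd, Function.comp, hij] using h

lemma backward_aux {n : ℕ} (f : (Fin n → Bool) → Fin n → Bool)
    (x y : Fin n → Bool) (hsub : ∀ i, x i ≠ y i → x i ≠ f x i)
    (hfy : f y = f x) :
    (Dset y (f y)).card + (Dset x y).card = (Dset x (f x)).card := by
  have hDsub : Dset x y ⊆ Dset x (f x) := fun i hi =>
    mem_Dset.mpr (hsub i (mem_Dset.mp hi))
  have hkey : Dset y (f y) = Dset x (f x) \ Dset x y := by
    ext j
    simp only [mem_Dset, Finset.mem_sdiff, hfy]
    have h := hsub j
    revert h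
    cases x j <;> cases y j <;> cases f x j <;> simp
  rw [hkey, Finset.card_sdiff_of_subset hDsub]
  have := Finset.card_le_card hDsub
  omega

lemma main_aux {n : ℕ} (f : (Fin n → Bool) → Fin n → Bool)
    (hf : IsCommutative' f) (y : Fin n → Bool) :
    ∀ k : ℕ, ∀ x : Fin n → Bool, (Dset x y).card = k →
      (∀ i, x i ≠ y i → x i ≠ f x i) →
      (Dset y (f y)).card ≤ (Dset x (f x)).card ∧
      (Dset x (f x)).card - (Dset y (f y)).card ≤ k ∧
      (k = (Dset x (f x)).card - (Dset y (f y)).card → f y = f x) := by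
  intro k
  induction k with
  | zero =>
    intro x hcard hsub
    have hxy : x = y := by
      funext j
      by_contra h
      have hj : j ∈ Dset x y := mem_Dset.mpr h
      rw [Finset.card_eq_zero] at hcard
      simp [hcard] at hj
    subst hxy
    exact ⟨le_rfl, by omega, fun _ => rfl⟩
  | succ k ih =>
    intro x hcard hsub
    obtain ⟨i, hi⟩ : (Dset x y).Nonempty := by
      rw [← Finset.card_pos, hcard]; omega
    have hixy : x i ≠ y i := mem_Dset.mp hi
    have hifx : x i ≠ f x i := hsub i hixy
    set x' := upd f {i} x with hx'
    have hx'i : x' i = f x i := by simp [hx', upd]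
    have hx'j : ∀ j, j ≠ i → x' j = x j := fun j hj => by
      simp [hx', upd, hj]
    have hfx'j : ∀ j, j ≠ i → f x' j = f x j := fun j hj =>
      comm_step f hf x i j hj
    have hyi : y i = f x i := by
      revert hixy hifx; cases x i <;> cases y i <;> cases f x i <;> simp
    have hDx'y : Dset x' y = (Dset x y).erase i := by
      ext j
      by_cases hj : j = i
      · subst hj; simp [mem_Dset, hx'i, hyi]
      · simp [mem_Dset, Finset.mem_erase, hj, hx'j j hj]
    have hcard' : (Dset x' y).card = k := by
      rw [hDx'y, Finset.card_erase_of_mem hi, hcard]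
      omega
    have hsub' : ∀ j, x' j ≠ y j → x' j ≠ f x' j := by
      intro j hj
      have hji : j ≠ i := by
        intro h; subst h
        rw [hx'i] at hj
        exact hj hyi.symm
      rw [hx'j j hji] at hj ⊢
      rw [hfx'j j hji]
      exact hsub j hj
    obtain ⟨ih1, ih2, ih3⟩ := ih x' hcard' hsub'
    have hiA : i ∈ Dset x (f x) := mem_Dset.mpr hifx
    have hAoff : ∀ j, j ≠ i → (j ∈ Dset x' (f x') ↔ j ∈ Dset x (f x)) := by
      intro j hj
      rw [mem_Dset, mem_Dset, hx'j j hj, hfx'j j hj]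
    by_cases h1 : f x' i = f x i
    · have hfx' : f x' = f x := by
        funext j
        by_cases hj : j = i
        · subst hj; exact h1
        · exact hfx'j j hj
      have hA' : Dset x' (f x') = (Dset x (f x)).erase i := by
        ext j
        by_cases hj : j = i
        · subst hj; simp [mem_Dset, hx'i, hfx']
        · rw [Finset.mem_erase]
          simp only [hj, not_false_iff, true_and, ne_eq]
          exact hAoff j hj
      have hcardA' : (Dset x' (f x')).card = (Dset x (f x)).card - 1 := by
        rw [hA', Finset.card_erase_of_mem hiA]
      have hApos : 1 ≤ (Dset x (f x)).card :=
        Finset.card_pos.mpr ⟨i, hiA⟩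
      refine ⟨by omega, by omega, fun h => ?_⟩
      rw [← hfx']
      exact ih3 (by omega)
    · have hA' : Dset x' (f x') = Dset x (f x) := by
        ext j
        by_cases hj : j = i
        · subst hj
          rw [mem_Dset, mem_Dset, hx'i]
          exact iff_of_true (fun he => h1 he.symm) hifx
        · exact hAoff j hj
      rw [hA'] at ih1 ih2
      exact ⟨ih1, by omega, fun h => absurd h (by omega)⟩

/-- for a commutative network, with `δ_z = d_H(z, f(z))`, one has
`d_H(x,y) ≥ δ_x − δ_y ≥ 0` for `y ∈ [x, f(x)]`, with equality iff `f(y) = f(x)`. -/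
theorem stmt12 (n : ℕ) (f : (Fin n → Bool) → Fin n → Bool)
    (hf : IsCommutative' f) (x y : Fin n → Bool) (hy : y ∈ interval x (f x)) :
    (hdist x y : ℤ) ≥ (hdist x (f x) : ℤ) - (hdist y (f y) : ℤ) ∧
    (0 : ℤ) ≤ (hdist x (f x) : ℤ) - (hdist y (f y) : ℤ) ∧
    ((hdist x y : ℤ) = (hdist x (f x) : ℤ) - (hdist y (f y) : ℤ) ↔ f y = f x) := by
  have hsub : ∀ i, x i ≠ y i → x i ≠ f x i := fun i hi =>
    hy (show i ∈ delta x y from hi)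
  obtain ⟨h1, h2, h3⟩ := main_aux f hf y (Dset x y).card x rfl hsub
  have hb : f y = f x → (Dset y (f y)).card + (Dset x y).card = (Dset x (f x)).card :=
    backward_aux f x y hsub
  simp only [hdist_eq_card]
  refine ⟨by omega, by omega, ?_⟩
  constructor
  · intro h; exact h3 (by omega)
  · intro h; have := hb h; omega
end
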